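/- Let U ⊆ ℂⁿ be a connected open set and a ∈ U. Suppose ξ¹, …, ξⁿ : U → ℂⁿ are holomorphic vector fields that pairwise commute and whose values ξ¹(a), …, ξⁿ(a) span ℂⁿ. Then every holomorphic vector field η : U → ℂⁿ that commutes with each ξᵏ and satisfies η(a) = 0 vanishes identically on U. In particular, the evaluation map at a is injective on the complex span of {ξ¹, …, ξⁿ, η}. -/

import Mathlib

open Set Metric

/-- Identity theorem via restriction to complex lines: a `ℂ`-differentiable map on a
connected open set that vanishes near a point vanishes everywhere. -/
lemma zero_propagate {E F : Type*} [NormedAddCommGroup E] [NormedSpace ℂ E]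
    [NormedAddCommGroup F] [NormedSpace ℂ F] [CompleteSpace F]
    {η : E → F} {U : Set E} (hUopen : IsOpen U) (hUconn : IsPreconnected U)
    (hη : DifferentiableOn ℂ η U) {a : E} (ha : a ∈ U)
    (h0 : ∀ᶠ z in nhds a, η z = 0) : ∀ z ∈ U, η z = 0 := by
  -- ball step
  have step : ∀ w : E, ∀ ρ δ : ℝ, 0 < δ → Metric.ball w ρ ⊆ U →
      (∀ x ∈ Metric.ball w δ, η x = 0) → ∀ y ∈ Metric.ball w ρ, η y = 0 := by
    intro w ρ δ hδ hball hz y hy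
    rcases eq_or_ne y w with rfl | hyw
    · exact hz y (Metric.mem_ball_self hδ)
    set v : E := y - w with hv
    have hv0 : 0 < ‖v‖ := by
      rw [hv, norm_pos_iff, sub_ne_zero]; exact hyw
    have hρ : 0 < ρ := lt_of_le_of_lt dist_nonneg (Metric.mem_ball.1 hy)
    set R : ℝ := ρ / ‖v‖ with hR
    have hRpos : 0 < R := div_pos hρ hv0
    set L : ℂ → E := fun ζ => w + ζ • v with hL
    have hmaps : ∀ ζ : ℂ, ‖ζ‖ < R → L ζ ∈ Metric.ball w ρ := by
      intro ζ hζ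
      rw [Metric.mem_ball, dist_eq_norm, hL]
      rw [add_sub_cancel_left, norm_smul]
      calc ‖ζ‖ * ‖v‖ < R * ‖v‖ := by
            exact mul_lt_mul_of_pos_right hζ hv0
        _ = ρ := div_mul_cancel₀ _ hv0.ne'
    have hLdiff : Differentiable ℂ L := by
      exact (differentiable_id.smul_const v).const_add w
    have hgd : DifferentiableOn ℂ (η ∘ L) (Metric.ball (0:ℂ) R) := by
      apply hη.comp hLdiff.differentiableOn
      intro ζ hζ
      rw [Metric.mem_ball, dist_zero_right] at hζ
      exact hball (hmaps ζ hζ)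
    have hgA : AnalyticOnNhd ℂ (η ∘ L) (Metric.ball (0:ℂ) R) :=
      hgd.analyticOnNhd Metric.isOpen_ball
    have hg0 : (η ∘ L) =ᶠ[nhds (0:ℂ)] 0 := by
      filter_upwards [Metric.ball_mem_nhds (0:ℂ) (div_pos hδ hv0)] with ζ hζ
      rw [Metric.mem_ball, dist_zero_right] at hζ
      apply hz
      rw [Metric.mem_ball, dist_eq_norm, hL]
      rw [add_sub_cancel_left, norm_smul]
      calc ‖ζ‖ * ‖v‖ < (δ / ‖v‖) * ‖v‖ := mul_lt_mul_of_pos_right hζ hv0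
        _ = δ := div_mul_cancel₀ _ hv0.ne'
    have h0mem : (0:ℂ) ∈ Metric.ball (0:ℂ) R := Metric.mem_ball_self hRpos
    have heq := hgA.eqOn_zero_of_preconnected_of_eventuallyEq_zero
      (convex_ball (0:ℂ) R).isPreconnected h0mem hg0
    have h1mem : (1:ℂ) ∈ Metric.ball (0:ℂ) R := by
      rw [Metric.mem_ball, dist_zero_right, norm_one, hR, lt_div_iff₀ hv0, one_mul]
      rw [hv, ← dist_eq_norm]
      exact Metric.mem_ball.1 hy
    have h1v : w + (1:ℂ) • v = y := by rw [one_smul, hv]; abel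
    have h2 := heq h1mem
    simp only [Function.comp_apply, hL, Pi.zero_apply] at h2
    rwa [h1v] at h2
  -- clopen argument
  set Z : Set E := {z | ∀ᶠ x in nhds z, η x = 0} with hZ
  have hZopen : IsOpen Z := isOpen_setOf_eventually_nhds
  have hsub : U ⊆ Z := by
    apply hUconn.subset_of_closure_inter_subset hZopen ⟨a, ha, h0⟩
    rintro z ⟨hzc, hzU⟩
    obtain ⟨ρ, hρ, hρsub⟩ := Metric.isOpen_iff.1 hUopen z hzU
    obtain ⟨w, hwZ, hwd⟩ := Metric.mem_closure_iff.1 hzc (ρ/4) (by linarith)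
    obtain ⟨δ, hδ, hδz⟩ := Metric.eventually_nhds_iff_ball.1 hwZ
    have hbsub : Metric.ball w (ρ/2) ⊆ U := by
      intro x hx
      apply hρsub
      rw [Metric.mem_ball] at hx ⊢
      calc dist x z ≤ dist x w + dist w z := dist_triangle _ _ _
        _ < ρ/2 + ρ/4 := add_lt_add hx (by rw [dist_comm]; exact hwd)
        _ < ρ := by linarith
    have hz0 : ∀ x ∈ Metric.ball w (ρ/2), η x = 0 := step w (ρ/2) δ hδ hbsub hδz
    rw [hZ, Set.mem_setOf_eq, Metric.eventually_nhds_iff_ball]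
    exact ⟨ρ/2 - dist z w, by linarith, fun x hx => hz0 x (by
      rw [Metric.mem_ball] at hx ⊢
      calc dist x w ≤ dist x z + dist z w := dist_triangle _ _ _
        _ < (ρ/2 - dist z w) + dist z w := by linarith
        _ = ρ/2 := by ring)⟩
  intro z hzU
  exact (hsub hzU).self_of_nhds

/-- Cauchy estimate for the Fréchet derivative of a holomorphic map in several variables. -/
lemma fderiv_bound {n : ℕ} {U : Set (Fin n → ℂ)} (hU : IsOpen U)
    {f : (Fin n → ℂ) → (Fin n → ℂ)} (hf : DifferentiableOn ℂ f U)
    {a : Fin n → ℂ} {r C : ℝ} (hr : 0 < r)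
    (hsub : Metric.closedBall a (2*r) ⊆ U)
    (hC : ∀ x ∈ Metric.closedBall a (2*r), ‖f x‖ ≤ C)
    {w : Fin n → ℂ} (hw : w ∈ Metric.closedBall a r) :
    ‖fderiv ℂ f w‖ ≤ C / r := by
  have hwU : w ∈ U := hsub (Metric.closedBall_subset_closedBall (by linarith) hw)
  have hC0 : 0 ≤ C :=
    le_trans (norm_nonneg _) (hC a (Metric.mem_closedBall_self (by linarith)))
  apply ContinuousLinearMap.opNorm_le_bound _ (div_nonneg hC0 hr.le)
  intro v
  rcases eq_or_ne v 0 with rfl | hv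
  · simp
  have hv0 : 0 < ‖v‖ := norm_pos_iff.2 hv
  set R : ℝ := r / ‖v‖ with hR
  have hRpos : 0 < R := div_pos hr hv0
  set L : ℂ → (Fin n → ℂ) := fun ζ => w + ζ • v with hL
  have hmaps : ∀ ζ : ℂ, ‖ζ‖ ≤ R → L ζ ∈ Metric.closedBall a (2*r) := by
    intro ζ hζ
    rw [Metric.mem_closedBall]
    have h1 : dist (L ζ) w = ‖ζ‖ * ‖v‖ := by
      rw [hL, dist_eq_norm, add_sub_cancel_left, norm_smul]
    calc dist (L ζ) a ≤ dist (L ζ) w + dist w a := dist_triangle _ _ _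
      _ ≤ R * ‖v‖ + r := by
          apply add_le_add _ (Metric.mem_closedBall.1 hw)
          rw [h1]; exact mul_le_mul_of_nonneg_right hζ hv0.le
      _ = 2 * r := by rw [hR, div_mul_cancel₀ _ hv0.ne']; ring
  have hLdiff : Differentiable ℂ L := (differentiable_id.smul_const v).const_add w
  have hgd : DifferentiableOn ℂ (f ∘ L) (Metric.closedBall (0:ℂ) R) := by
    apply hf.comp hLdiff.differentiableOn
    intro ζ hζ
    rw [Metric.mem_closedBall, dist_zero_right] at hζ
    exact hsub (hmaps ζ hζ)
  have hdcc : DiffContOnCl ℂ (f ∘ L) (Metric.ball (0:ℂ) R) := by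
    apply DifferentiableOn.diffContOnCl
    rwa [closure_ball (0:ℂ) hRpos.ne']
  have hL0 : L 0 = w := by simp [hL]
  have hder : HasDerivAt (f ∘ L) (fderiv ℂ f w v) 0 := by
    have h1 : HasDerivAt L v 0 := by
      simpa [hL] using (((hasDerivAt_id (0:ℂ)).smul_const v).const_add w)
    have h2 : HasFDerivAt f (fderiv ℂ f w) (L 0) := by
      rw [hL0]
      exact (hf.differentiableAt (hU.mem_nhds hwU)).hasFDerivAt
    exact h2.comp_hasDerivAt 0 h1
  have hest := Complex.norm_deriv_le_of_forall_mem_sphere_norm_le hRpos hdcc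
    (fun ζ hζ => hC _ (hmaps ζ (by rw [mem_sphere_iff_norm, sub_zero] at hζ; exact hζ.le)))
  rw [hder.deriv] at hest
  calc ‖fderiv ℂ f w v‖ ≤ C / R := hest
    _ = C / r * ‖v‖ := by rw [hR]; field_simp

/-- Let `U ⊆ ℂⁿ` be a connected open set and `a ∈ U`. Suppose
`ξ¹, …, ξⁿ : U → ℂⁿ` are holomorphic vector fields that pairwise commute and whose
values at `a` span `ℂⁿ`. Then every holomorphic vector field `η` on `U` commuting
with each `ξᵏ` and vanishing at `a` vanishes identically on `U`; in particular the
evaluation map at `a` is injective on the complex span of `{ξ¹, …, ξⁿ, η}`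
(injectivity is expressed via equality on `U`). -/
theorem stmt_0 {n : ℕ} (U : Set (Fin n → ℂ)) (hUopen : IsOpen U) (hUconn : IsConnected U)
    (a : Fin n → ℂ) (ha : a ∈ U)
    (ξ : Fin n → ((Fin n → ℂ) → (Fin n → ℂ))) (η : (Fin n → ℂ) → (Fin n → ℂ))
    (hξ : ∀ k, DifferentiableOn ℂ (ξ k) U)
    (hη : DifferentiableOn ℂ η U)
    (hcomm : ∀ k l, ∀ z ∈ U,
      fderiv ℂ (ξ l) z (ξ k z) - fderiv ℂ (ξ k) z (ξ l z) = 0)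
    (hspan : Submodule.span ℂ (Set.range fun k => ξ k a) = ⊤)
    (hηcomm : ∀ k, ∀ z ∈ U,
      fderiv ℂ η z (ξ k z) - fderiv ℂ (ξ k) z (η z) = 0)
    (hηa : η a = 0) :
    (∀ z ∈ U, η z = 0) ∧
    (∀ f ∈ Submodule.span ℂ (Set.range ξ ∪ {η}),
      ∀ g ∈ Submodule.span ℂ (Set.range ξ ∪ {η}),
        f a = g a → Set.EqOn f g U) := by
  classical
  have hξcont : ∀ k, ContinuousOn (ξ k) U := fun k => (hξ k).continuousOn
  set T : (Fin n → ℂ) → ((Fin n → ℂ) →L[ℂ] (Fin n → ℂ)) :=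
    fun z => ∑ k, (ContinuousLinearMap.proj k).smulRight (ξ k z) with hT
  have hTapp : ∀ z w, T z w = ∑ k, w k • ξ k z := by
    intro z w
    simp [hT]
  have hTcont : ContinuousOn T U := by
    apply continuousOn_finset_sum
    intro k _
    exact ((ContinuousLinearMap.smulRightL ℂ (Fin n → ℂ) (Fin n → ℂ)
      (ContinuousLinearMap.proj k)).continuous).comp_continuousOn (hξcont k)
  have hTa : IsUnit (T a) := by
    have hsurj : Function.Surjective (T a) := by
      intro x
      have hx : x ∈ Submodule.span ℂ (Set.range fun k => ξ k a) := by
        rw [hspan]; trivial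
      obtain ⟨c, hc⟩ := (Submodule.mem_span_range_iff_exists_fun ℂ).1 hx
      exact ⟨c, by rw [hTapp]; exact hc⟩
    have hinj : Function.Injective (T a) :=
      (LinearMap.injective_iff_surjective
        (f := ((T a : (Fin n → ℂ) →L[ℂ] (Fin n → ℂ)) : (Fin n → ℂ) →ₗ[ℂ] (Fin n → ℂ)))).2 hsurj
    let e : (Fin n → ℂ) ≃ₗ[ℂ] (Fin n → ℂ) :=
      LinearEquiv.ofBijective ((T a : (Fin n → ℂ) →L[ℂ] (Fin n → ℂ)) :
        (Fin n → ℂ) →ₗ[ℂ] (Fin n → ℂ)) ⟨hinj, hsurj⟩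
    exact ⟨e.toContinuousLinearEquiv.toUnit, by ext w; rfl⟩
  set Ω : Set (Fin n → ℂ) := U ∩ T ⁻¹' {x | IsUnit x} with hΩ
  have hΩopen : IsOpen Ω := hTcont.isOpen_inter_preimage hUopen Units.isOpen
  have haΩ : a ∈ Ω := ⟨ha, hTa⟩
  obtain ⟨r', hr'0, hr'sub⟩ : ∃ r' > 0, Metric.closedBall a r' ⊆ Ω :=
    (Metric.nhds_basis_closedBall.mem_iff).1 (hΩopen.mem_nhds haΩ)
  set r : ℝ := r' / 2 with hrdef
  have hr0 : 0 < r := by positivity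
  have h2r : Metric.closedBall a (2*r) ⊆ Ω := by
    rw [hrdef]; rw [(by ring : 2 * (r'/2) = r')]; exact hr'sub
  have hrsub : Metric.closedBall a r ⊆ Ω :=
    (Metric.closedBall_subset_closedBall (by linarith)).trans h2r
  have hΩU : Ω ⊆ U := Set.inter_subset_left
  set Rinv : (Fin n → ℂ) → ((Fin n → ℂ) →L[ℂ] (Fin n → ℂ)) :=
    fun w => Ring.inverse (T w) with hRinv
  have hRcont : ContinuousOn Rinv Ω := by
    intro w hw
    obtain ⟨u, hu⟩ := hw.2
    have h1 : ContinuousAt Ring.inverse (T w) := hu ▸ NormedRing.inverse_continuousAt u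
    exact h1.comp_continuousWithinAt ((hTcont w hw.1).mono Set.inter_subset_left)
  -- bounds
  obtain ⟨B1, hB1⟩ := (isCompact_closedBall a r).exists_bound_of_continuousOn
    (hRcont.mono hrsub)
  have hB1nn : 0 ≤ B1 := le_trans (norm_nonneg _) (hB1 a (Metric.mem_closedBall_self hr0.le))
  have hCk : ∀ k, ∃ Ck : ℝ, 0 ≤ Ck ∧ ∀ x ∈ Metric.closedBall a (2*r), ‖ξ k x‖ ≤ Ck := by
    intro k
    obtain ⟨Ck, hCk⟩ := (isCompact_closedBall a (2*r)).exists_bound_of_continuousOn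
      ((hξcont k).mono (h2r.trans hΩU))
    exact ⟨Ck, le_trans (norm_nonneg _)
      (hCk a (Metric.mem_closedBall_self (by linarith))), hCk⟩
  choose Ck hCknn hCkb using hCk
  have hfb : ∀ k, ∀ w ∈ Metric.closedBall a r, ‖fderiv ℂ (ξ k) w‖ ≤ Ck k / r :=
    fun k w hw => fderiv_bound hUopen (hξ k) hr0 (h2r.trans hΩU) (hCkb k) hw
  -- local vanishing on the closed ball
  have key : ∀ z ∈ Metric.closedBall a r, η z = 0 := by
    intro z hz
    set M : (Fin n → ℂ) → ((Fin n → ℂ) →L[ℂ] (Fin n → ℂ)) :=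
      fun w => ∑ k, (Rinv w (z - a)) k • fderiv ℂ (ξ k) w with hM
    set Kr : ℝ := B1 * ‖z - a‖ * ∑ k, (Ck k / r) with hKr
    have hMnorm : ∀ w ∈ Metric.closedBall a r, ‖M w‖ ≤ Kr := by
      intro w hw
      rw [hM]
      calc ‖∑ k, (Rinv w (z - a)) k • fderiv ℂ (ξ k) w‖
          ≤ ∑ k, ‖(Rinv w (z - a)) k • fderiv ℂ (ξ k) w‖ := norm_sum_le _ _
        _ ≤ ∑ k, (B1 * ‖z - a‖) * (Ck k / r) := by
            apply Finset.sum_le_sum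
            intro k _
            rw [norm_smul]
            apply mul_le_mul _ (hfb k w hw) (norm_nonneg _)
              (mul_nonneg hB1nn (norm_nonneg _))
            calc ‖(Rinv w (z - a)) k‖ ≤ ‖Rinv w (z - a)‖ := norm_le_pi_norm _ k
              _ ≤ ‖Rinv w‖ * ‖z - a‖ := (Rinv w).le_opNorm _
              _ ≤ B1 * ‖z - a‖ :=
                  mul_le_mul_of_nonneg_right (hB1 w hw) (norm_nonneg _)
        _ = Kr := by rw [hKr, ← Finset.mul_sum]
    set K : NNReal := ⟨max Kr 0, le_max_right _ _⟩ with hK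
    have hMK : ∀ w ∈ Metric.closedBall a r, LipschitzWith K (M w) := by
      intro w hw
      refine (M w).lipschitz.weaken ?_
      rw [← NNReal.coe_le_coe]
      exact (hMnorm w hw).trans (le_max_left _ _)
    have hmain : ∀ w ∈ Metric.closedBall a r, fderiv ℂ η w (z - a) = M w (η w) := by
      intro w hw
      have hwΩ : w ∈ Ω := hrsub hw
      have hwU : w ∈ U := hwΩ.1
      have hunit : IsUnit (T w) := hwΩ.2
      have hid : T w (Rinv w (z - a)) = z - a := by
        have h1 : T w * Rinv w = 1 := Ring.mul_inverse_cancel _ hunit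
        calc T w (Rinv w (z - a)) = (T w * Rinv w) (z - a) := rfl
          _ = z - a := by rw [h1]; simp
      have h2 : (z - a) = ∑ k, (Rinv w (z - a)) k • ξ k w := by
        conv_lhs => rw [← hid, hTapp]
      calc fderiv ℂ η w (z - a)
          = ∑ k, (Rinv w (z - a)) k • fderiv ℂ η w (ξ k w) := by
            conv_lhs => rw [h2]
            simp
        _ = ∑ k, (Rinv w (z - a)) k • fderiv ℂ (ξ k) w (η w) := by
            refine Finset.sum_congr rfl fun k _ => ?_
            rw [sub_eq_zero.mp (hηcomm k w hwU)]
        _ = M w (η w) := by simp [hM]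
    set τ : ℝ → ℝ := fun t => max 0 (min 1 t) with hτ
    set σ : ℝ → (Fin n → ℂ) := fun t => a + τ t • (z - a) with hσ
    have hτ01 : ∀ t, 0 ≤ τ t ∧ τ t ≤ 1 :=
      fun t => ⟨le_max_left _ _, max_le zero_le_one (min_le_left _ _)⟩
    have hσball : ∀ t, σ t ∈ Metric.closedBall a r := by
      intro t
      rw [Metric.mem_closedBall, dist_eq_norm]
      have h1 : σ t - a = τ t • (z - a) := by
        simp only [hσ]; exact add_sub_cancel_left a _
      rw [h1, norm_smul]
      have hz' : ‖z - a‖ ≤ r := by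
        rw [← dist_eq_norm]; exact Metric.mem_closedBall.1 hz
      calc ‖τ t‖ * ‖z - a‖ ≤ 1 * r := by
            apply mul_le_mul _ hz' (norm_nonneg _) zero_le_one
            rw [Real.norm_eq_abs, abs_of_nonneg (hτ01 t).1]; exact (hτ01 t).2
        _ = r := one_mul r
    have hσU : ∀ t, σ t ∈ U := fun t => (hrsub (hσball t)).1
    have hτcont : Continuous τ := continuous_const.max (continuous_const.min continuous_id)
    have hσcont : Continuous σ := continuous_const.add (hτcont.smul continuous_const)
    have hcontg : ContinuousOn (fun t => η (σ t)) (Set.Icc (0:ℝ) 1) :=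
      hη.continuousOn.comp hσcont.continuousOn (fun t _ => hσU t)
    have hg' : ∀ t ∈ Set.Ico (0:ℝ) 1,
        HasDerivWithinAt (fun s => η (σ s)) (M (σ t) (η (σ t))) (Set.Ici t) t := by
      intro t ht
      have hτt : τ t = t := by
        simp only [hτ]
        rw [min_eq_right ht.2.le, max_eq_right ht.1]
      have hσt : σ t = a + t • (z - a) := by simp only [hσ]; rw [hτt]
      have hσder : HasDerivWithinAt σ (z - a) (Set.Ici t) t := by
        have hlin : HasDerivWithinAt (fun s : ℝ => a + s • (z - a)) (z - a) (Set.Ici t) t := by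
          simpa using (((hasDerivAt_id t).smul_const (z - a)).const_add a).hasDerivWithinAt
        refine hlin.congr_of_eventuallyEq ?_ hσt
        filter_upwards [mem_nhdsWithin_of_mem_nhds (Iio_mem_nhds ht.2),
          self_mem_nhdsWithin] with s hs1 hs2
        have hs0 : (0:ℝ) ≤ s := le_trans ht.1 hs2
        have hτs : τ s = s := by
          simp only [hτ]
          rw [min_eq_right (le_of_lt hs1), max_eq_right hs0]
        simp only [hσ]; rw [hτs]
      have hηd : HasFDerivAt η (fderiv ℂ η (σ t)) (σ t) :=
        (hη.differentiableAt (hUopen.mem_nhds (hσU t))).hasFDerivAt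
      have h3 : HasDerivWithinAt (fun s => η (σ s)) (fderiv ℂ η (σ t) (z - a))
          (Set.Ici t) t := by
        exact (hηd.restrictScalars ℝ).comp_hasDerivWithinAt t hσder
      rwa [hmain (σ t) (hσball t)] at h3
    have hzeroder : ∀ t ∈ Set.Ico (0:ℝ) 1,
        HasDerivWithinAt (fun _ : ℝ => (0 : Fin n → ℂ))
          (M (σ t) ((fun _ : ℝ => (0 : Fin n → ℂ)) t)) (Set.Ici t) t := by
      intro t ht
      simp only [map_zero]
      exact hasDerivWithinAt_const t _ 0
    have hσ0 : σ 0 = a := by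
      have h00 : τ 0 = 0 := by simp [hτ]
      simp only [hσ]; rw [h00]; simp
    have huniq := ODE_solution_unique (v := fun t w => M (σ t) w) (K := K)
      (fun t => hMK (σ t) (hσball t)) hcontg hg' continuousOn_const hzeroder
      (by simp [hσ0, hηa])
    have h1 : η (σ 1) = 0 := huniq (Set.right_mem_Icc.2 zero_le_one)
    have hσ1 : σ 1 = z := by
      have h11 : τ 1 = 1 := by simp [hτ]
      simp only [hσ]; rw [h11, one_smul, add_comm]
      exact sub_add_cancel z a
    rwa [hσ1] at h1
  -- globalize
  have hev0 : η =ᶠ[nhds a] 0 :=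
    Filter.eventuallyEq_of_mem (Metric.closedBall_mem_nhds a hr0) (fun z hz => key z hz)
  have hzero : ∀ z ∈ U, η z = 0 :=
    zero_propagate hUopen hUconn.isPreconnected hη ha hev0
  have hindep : LinearIndependent ℂ (fun k => ξ k a) := by
    apply linearIndependent_of_top_le_span_of_card_eq_finrank (le_of_eq hspan.symm)
    simp
  refine ⟨hzero, ?_⟩
  intro f hf' g hg' hfg
  have hsub : f - g ∈ Submodule.span ℂ (Set.range ξ ∪ {η}) := Submodule.sub_mem _ hf' hg'
  rw [Submodule.span_union] at hsub
  obtain ⟨p, hp, q, hq, hpq⟩ := Submodule.mem_sup.1 hsub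
  obtain ⟨c, hc⟩ := Submodule.mem_span_singleton.1 hq
  obtain ⟨d, hd⟩ := (Submodule.mem_span_range_iff_exists_fun ℂ).1 hp
  have heval : ∑ k, d k • ξ k a = 0 := by
    have h0 : p a + q a = 0 := by
      have h1 : (f - g) a = 0 := by simp [hfg]
      rw [← hpq] at h1
      exact h1
    rw [← hc, ← hd] at h0
    simpa [hηa, Finset.sum_apply] using h0
  have hd0 : ∀ k, d k = 0 := Fintype.linearIndependent_iff.1 hindep d heval
  have hp0 : p = 0 := by
    rw [← hd]
    have : d = 0 := funext hd0
    rw [this]; simp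
  intro z hz
  have hval : (f - g) z = 0 := by
    rw [← hpq, hp0, ← hc]
    have : η z = 0 := hzero z hz
    simp [this]
  rw [Pi.sub_apply] at hval
  exact sub_eq_zero.mp hval
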